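/- Growth of the Monteiro–Svaiter accumulated coefficients (Lemma 3.7(a)): for every N ≥ 0, A_N ≥ (1/4) (∑_{k=1}^N 1/√(L_k))². -/

import Mathlib

/-- Growth of the Monteiro–Svaiter accumulated coefficients (Lemma 3.7(a)). -/
theorem monteiro_svaiter_coefficient_growth
    (L a A : ℕ → ℝ)
    (hL : ∀ k, 0 < L (k + 1))
    (hA0 : A 0 = 0)
    (ha : ∀ k, a (k + 1) =
      (1 / L (k + 1) + Real.sqrt (1 / (L (k + 1)) ^ 2 + 4 * A k / L (k + 1))) / 2)
    (hA : ∀ k, A (k + 1) = A k + a (k + 1))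
    (N : ℕ) :
    A N ≥ 1 / 4 * (∑ k ∈ Finset.Icc 1 N, 1 / Real.sqrt (L k)) ^ 2 := by
  suffices h : 0 ≤ A N ∧
      (1/2) * (∑ k ∈ Finset.Icc 1 N, 1 / Real.sqrt (L k)) ≤ Real.sqrt (A N) by
    obtain ⟨h0, h1⟩ := h
    have hs : 0 ≤ ∑ k ∈ Finset.Icc 1 N, 1 / Real.sqrt (L k) :=
      Finset.sum_nonneg fun k _ => by positivity
    have hsq : ((1/2) * (∑ k ∈ Finset.Icc 1 N, 1 / Real.sqrt (L k)))^2 ≤ (Real.sqrt (A N))^2 :=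
      pow_le_pow_left₀ (by positivity) h1 2
    rw [Real.sq_sqrt h0] at hsq
    nlinarith [hsq]
  induction N with
  | zero => simp [hA0]
  | succ n ih =>
    obtain ⟨h0, h1⟩ := ih
    have hLn := hL n
    have hsqL : 0 < Real.sqrt (L (n+1)) := Real.sqrt_pos.mpr hLn
    have hsqA : 0 ≤ Real.sqrt (A n) := Real.sqrt_nonneg _
    have h4 : Real.sqrt (4 * A n / L (n+1)) = 2 * Real.sqrt (A n) / Real.sqrt (L (n+1)) := by
      rw [Real.sqrt_div (by positivity), Real.sqrt_mul (by norm_num : (0:ℝ) ≤ 4),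
        show Real.sqrt 4 = 2 by
          rw [show (4:ℝ) = 2^2 by norm_num, Real.sqrt_sq (by norm_num)]]
    have hmono : Real.sqrt (4 * A n / L (n+1)) ≤
        Real.sqrt (1 / (L (n+1))^2 + 4 * A n / L (n+1)) :=
      Real.sqrt_le_sqrt (le_add_of_nonneg_left (by positivity))
    have key : (Real.sqrt (A n) + 1/(2*Real.sqrt (L (n+1))))^2 ≤ A (n+1) := by
      have hsqAq : Real.sqrt (A n) ^ 2 = A n := Real.sq_sqrt h0
      have hsqLq : Real.sqrt (L (n+1)) ^ 2 = L (n+1) := Real.sq_sqrt hLn.le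
      rw [hA n, ha n]
      rw [h4] at hmono
      have hLinv : 0 < 1 / L (n+1) := by positivity
      have expand : (Real.sqrt (A n) + 1/(2*Real.sqrt (L (n+1))))^2
          = A n + Real.sqrt (A n)/Real.sqrt (L (n+1)) + 1/(4*L (n+1)) := by
        have h2 : (1/(2*Real.sqrt (L (n+1))))^2 = 1/(4*L (n+1)) := by
          rw [div_pow, mul_pow, hsqLq]; norm_num
        have h3 : 2 * Real.sqrt (A n) * (1/(2*Real.sqrt (L (n+1))))
            = Real.sqrt (A n)/Real.sqrt (L (n+1)) := by
          field_simp
        rw [add_sq, hsqAq, h3, h2]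
      rw [expand]
      rw [mul_div_assoc] at hmono
      have hhalf : Real.sqrt (A n)/Real.sqrt (L (n+1))
          ≤ Real.sqrt (1 / (L (n+1))^2 + 4 * A n / L (n+1)) / 2 := by
        linarith
      have hq : (1:ℝ)/(4*L (n+1)) ≤ 1/L (n+1)/2 := by
        rw [div_div]
        apply one_div_le_one_div_of_le (by positivity)
        nlinarith
      linarith
    have hA1 : 0 ≤ A (n+1) := le_trans (by positivity) key
    refine ⟨hA1, ?_⟩
    have hstep : Real.sqrt (A n) + 1/(2*Real.sqrt (L (n+1))) ≤ Real.sqrt (A (n+1)) := by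
      have := Real.sqrt_le_sqrt key
      rwa [Real.sqrt_sq (by positivity)] at this
    rw [Finset.sum_Icc_succ_top (by omega : 1 ≤ n+1)]
    have : (1/2) * (∑ k ∈ Finset.Icc 1 n, 1 / Real.sqrt (L k)) + 1/(2*Real.sqrt (L (n+1)))
        ≤ Real.sqrt (A (n+1)) := le_trans (by linarith) hstep
    rw [mul_add]
    calc (1/2) * (∑ k ∈ Finset.Icc 1 n, 1 / Real.sqrt (L k)) + 1/2 * (1/Real.sqrt (L (n+1)))
        = (1/2) * (∑ k ∈ Finset.Icc 1 n, 1 / Real.sqrt (L k)) + 1/(2*Real.sqrt (L (n+1))) := by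
          ring
      _ ≤ Real.sqrt (A (n+1)) := this
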